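/- Let Ω ⊆ ℝ^d be open convex and f : Ω → ℝ of class C^k with D^k f Lipschitz with constant L. Then for every (k+1)-tuple of vectors u = (u₁,…,u_{k+1}) and every x such that the relevant parallelepiped lies in Ω, ‖Δ^{k+1}_u f(x)‖ ≤ L · ‖u₁‖⋯‖u_{k+1}‖. -/

import Mathlib

open Finset

def fdiff {X Y : Type*} [AddCommGroup X] [AddCommGroup Y] {m : ℕ}
    (u : Fin m → X) (f : X → Y) (x : X) : Y :=
  ∑ α : Fin m → Bool,
    ((-1 : ℤ) ^ (m - (Finset.univ.filter fun i => α i).card)) •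
      f (x + ∑ i, if α i then u i else 0)

lemma fdiff_zero {X Y : Type*} [AddCommGroup X] [AddCommGroup Y]
    (u : Fin 0 → X) (f : X → Y) (x : X) : fdiff u f x = f x := by
  simp [fdiff]

lemma card_cons_true {m : ℕ} (β : Fin m → Bool) :
    (univ.filter fun i => (Fin.cons true β : Fin (m+1) → Bool) i).card
      = (univ.filter fun i => β i).card + 1 := by
  rw [Finset.card_filter, Finset.card_filter, Fin.sum_univ_succ]
  simp [add_comm]

lemma card_cons_false {m : ℕ} (β : Fin m → Bool) :
    (univ.filter fun i => (Fin.cons false β : Fin (m+1) → Bool) i).card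
      = (univ.filter fun i => β i).card := by
  rw [Finset.card_filter, Finset.card_filter, Fin.sum_univ_succ]
  simp

lemma card_le_bool {m : ℕ} (β : Fin m → Bool) : (univ.filter fun i => β i).card ≤ m :=
  (Finset.card_filter_le _ _).trans (by simp)

lemma fdiff_cons {X Y : Type*} [AddCommGroup X] [AddCommGroup Y] {m : ℕ}
    (u : Fin (m+1) → X) (f : X → Y) (x : X) :
    fdiff u f x = fdiff (Fin.tail u) f (x + u 0) - fdiff (Fin.tail u) f x := by
  unfold fdiff
  rw [← (Fin.consEquiv (fun _ => Bool)).sum_comp, Fintype.sum_prod_type, Fintype.sum_bool]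
  rw [sub_eq_add_neg, ← Finset.sum_neg_distrib]
  congr 1
  · refine Finset.sum_congr rfl fun β _ => ?_
    have h2 := card_le_bool β
    simp only [Fin.consEquiv_apply, card_cons_true β]
    have hs : (m + 1) - ((univ.filter fun i => β i).card + 1)
        = m - (univ.filter fun i => β i).card := by omega
    rw [hs]
    congr 1
    rw [Fin.sum_univ_succ]
    simp [Fin.cons_zero, Fin.cons_succ, Fin.tail, add_assoc]
  · refine Finset.sum_congr rfl fun β _ => ?_
    have h2 := card_le_bool β
    simp only [Fin.consEquiv_apply, card_cons_false β]
    have hs : (m + 1) - (univ.filter fun i => β i).card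
        = (m - (univ.filter fun i => β i).card) + 1 := by omega
    rw [hs, pow_succ, mul_comm, neg_one_mul, neg_smul]
    congr 2
    rw [Fin.sum_univ_succ]
    simp [Fin.tail]

private theorem fdiff_key (E : Type) [NormedAddCommGroup E] [NormedSpace ℝ E]
    (Ω : Set E) (hΩ : IsOpen Ω) (hconv : Convex ℝ Ω) (m : ℕ) :
    ∀ (Y : Type) [NormedAddCommGroup Y] [NormedSpace ℝ Y] (f : E → Y) (L : NNReal),
      ContDiffOn ℝ m f Ω → LipschitzOnWith L (iteratedFDerivWithin ℝ m f Ω) Ω →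
      ∀ (u : Fin (m + 1) → E) (x : E),
        (∀ t ∈ Set.Icc (0 : Fin (m + 1) → ℝ) 1, x + ∑ i, t i • u i ∈ Ω) →
        ‖fdiff u f x‖ ≤ L * ∏ i, ‖u i‖ := by
  induction m with
  | zero =>
    intro Y _ _ f L hf hL u x hpar
    have hx : x ∈ Ω := by simpa using hpar 0 ⟨le_rfl, fun i => zero_le_one⟩
    have hxu : x + u 0 ∈ Ω := by
      simpa [Fin.sum_univ_one] using hpar 1 ⟨fun i => zero_le_one, le_rfl⟩
    have hLf : dist (f (x + u 0)) (f x) ≤ L * dist (x + u 0) x := by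
      have h := (lipschitzOnWith_iff_dist_le_mul.1 hL) (x + u 0) hxu x hx
      rw [iteratedFDerivWithin_zero_eq_comp] at h
      simp only [Function.comp_apply, LinearIsometryEquiv.dist_map] at h
      simpa using h
    rw [fdiff_cons, fdiff_zero, fdiff_zero]
    have : dist (x + u 0) x = ‖u 0‖ := by simp [dist_eq_norm]
    rw [dist_eq_norm, this] at hLf
    simpa [Fin.prod_univ_one] using hLf
  | succ n IH =>
    intro Y _ _ f L hf hL u x hpar
    set c := u 0 with hc
    set u' := Fin.tail u with hu'
    set F := fderivWithin ℝ f Ω with hFdef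
    have hu : UniqueDiffOn ℝ Ω := hΩ.uniqueDiffOn
    have hF : ContDiffOn ℝ n F Ω := hf.fderivWithin hu (by norm_cast)
    have hLF : LipschitzOnWith L (iteratedFDerivWithin ℝ n F Ω) Ω := by
      rw [lipschitzOnWith_iff_dist_le_mul] at hL ⊢
      intro a ha b hb
      have h := hL a ha b hb
      rw [iteratedFDerivWithin_succ_eq_comp_right hu ha,
        iteratedFDerivWithin_succ_eq_comp_right hu hb] at h
      simpa [Function.comp] using h
    have hmem : ∀ (s : ℝ), 0 ≤ s → s ≤ 1 → ∀ t : Fin (n+1) → ℝ, t ∈ Set.Icc 0 1 →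
        (x + s • c) + ∑ i, t i • u' i ∈ Ω := by
      intro s hs0 hs1 t ht
      have h1 : Fin.cons s t ∈ Set.Icc (0 : Fin (n+1+1) → ℝ) 1 :=
        ⟨fun i => Fin.cases hs0 (fun j => ht.1 j) i,
         fun i => Fin.cases hs1 (fun j => ht.2 j) i⟩
      have h2 := hpar (Fin.cons s t) h1
      rw [Fin.sum_univ_succ] at h2
      simpa [u', Fin.tail, add_assoc] using h2
    have hSΩ : ∀ y ∈ segment ℝ x (x + c), ∃ s : ℝ, 0 ≤ s ∧ s ≤ 1 ∧ y = x + s • c := by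
      intro y hy
      rw [segment_eq_image'] at hy
      obtain ⟨s, hs, rfl⟩ := hy
      exact ⟨s, hs.1, hs.2, by simp⟩
    have hbound : ∀ y ∈ segment ℝ x (x + c),
        ‖fdiff u' F y‖ ≤ L * ∏ i, ‖u' i‖ := by
      intro y hy
      obtain ⟨s, hs0, hs1, rfl⟩ := hSΩ y hy
      exact IH _ F L hF hLF u' _ (fun t ht => hmem s hs0 hs1 t ht)
    have hderiv : ∀ y ∈ segment ℝ x (x + c),
        HasFDerivWithinAt (fun z => fdiff u' f z) (fdiff u' F y) (segment ℝ x (x + c)) y := by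
      intro y hy
      simp only [fdiff]
      refine HasFDerivWithinAt.fun_sum fun β _ => ?_
      set v := ∑ i, if β i then u' i else 0 with hv
      have hvmem : ∀ z ∈ segment ℝ x (x + c), z + v ∈ Ω := by
        intro z hz
        obtain ⟨s, hs0, hs1, rfl⟩ := hSΩ z hz
        have hind : (fun i => if β i then (1:ℝ) else 0) ∈ Set.Icc (0 : Fin (n+1) → ℝ) 1 :=
          ⟨fun i => by dsimp; split <;> norm_num, fun i => by dsimp; split <;> norm_num⟩
        have := hmem s hs0 hs1 _ hind
        simpa [ite_smul, hv] using this
      have hfd : HasFDerivWithinAt f (F (y + v)) Ω (y + v) :=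
        (hf.differentiableOn (by norm_cast) (y + v) (hvmem y hy)).hasFDerivWithinAt
      have h2 : HasFDerivWithinAt (fun z : E => z + v) (ContinuousLinearMap.id ℝ E)
          (segment ℝ x (x + c)) y := ((hasFDerivAt_id y).add_const v).hasFDerivWithinAt
      have h3 := (hfd.comp y h2 (fun z hz => hvmem z hz)).const_smul
        ((-1 : ℤ) ^ (n + 1 - (Finset.univ.filter fun i => β i).card))
      simpa [Function.comp, ContinuousLinearMap.comp_id, Pi.smul_def] using h3
    have hMVT := (convex_segment x (x + c)).norm_image_sub_le_of_norm_hasFDerivWithin_le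
      hderiv hbound (left_mem_segment ℝ x (x + c)) (right_mem_segment ℝ x (x + c))
    rw [fdiff_cons]
    calc ‖fdiff (Fin.tail u) f (x + u 0) - fdiff (Fin.tail u) f x‖
        ≤ (L * ∏ i, ‖u' i‖) * ‖(x + c) - x‖ := hMVT
      _ = L * ∏ i, ‖u i‖ := by
          rw [add_sub_cancel_left]
          have : (∏ i : Fin (n+1+1), ‖u i‖) = ‖u 0‖ * ∏ i : Fin (n+1), ‖u' i‖ := by
            rw [Fin.prod_univ_succ]; rfl
          rw [this]; ring

theorem fdiff_bound_of_lipschitz_deriv {d : ℕ} (Ω : Set (EuclideanSpace ℝ (Fin d)))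
    (hΩ : IsOpen Ω) (hconv : Convex ℝ Ω) {k : ℕ}
    (f : EuclideanSpace ℝ (Fin d) → ℝ) (hf : ContDiffOn ℝ k f Ω) (L : NNReal)
    (hL : LipschitzOnWith L (iteratedFDerivWithin ℝ k f Ω) Ω)
    (u : Fin (k + 1) → EuclideanSpace ℝ (Fin d)) (x : EuclideanSpace ℝ (Fin d))
    (hpar : ∀ t ∈ Set.Icc (0 : Fin (k + 1) → ℝ) 1, x + ∑ i, t i • u i ∈ Ω) :
    ‖fdiff u f x‖ ≤ L * ∏ i, ‖u i‖ :=
  fdiff_key _ Ω hΩ hconv k ℝ f L hf hL u x hpar
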